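/- arXiv:2208.04341 — 2 statements merged into one kernel-verified Lean document; each statement's English description precedes it below -/
import Mathlib

section
/- Let ρ₀ = (1/6)·[[2,0,0,0],[0,1,1,0],[0,1,1,0],[0,0,0,2]] and ρ₁ = (1/2)·[[0,0,0,0],[0,1,-1,0],[0,-1,1,0],[0,0,0,0]] be 4×4 complex matrices indexed by Fin 2 × Fin 2. For every matrix Π₀ indexed by Fin 2 × Fin 2 such that Π₀, 1 − Π₀, Π₀^{T_B}, and (1 − Π₀)^{T_B} are all positive semidefinite, the real part of (1/2)·(Tr(Π₀·ρ₀) + Tr((1 − Π₀)·ρ₁)) is at most 5/6. -/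
open Matrix
open scoped ComplexOrder

noncomputable section

/-- Encode a pair of qubits (row/column order 00, 01, 10, 11) as an index in `Fin 4`. -/
def idx4 : Fin 2 × Fin 2 → Fin 4 :=
  fun p => ⟨2 * p.1.val + p.2.val, by have := p.1.isLt; have := p.2.isLt; omega⟩

/-- Uniform mixture of the three symmetric Bell states. -/
def ρ₀ : Matrix (Fin 2 × Fin 2) (Fin 2 × Fin 2) ℂ :=
  (1/6 : ℂ) • Matrix.of fun p q =>
    (!![2,0,0,0; 0,1,1,0; 0,1,1,0; 0,0,0,2] : Matrix (Fin 4) (Fin 4) ℂ) (idx4 p) (idx4 q)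

/-- The antisymmetric Bell state. -/
def ρ₁ : Matrix (Fin 2 × Fin 2) (Fin 2 × Fin 2) ℂ :=
  (1/2 : ℂ) • Matrix.of fun p q =>
    (!![0,0,0,0; 0,1,-1,0; 0,-1,1,0; 0,0,0,0] : Matrix (Fin 4) (Fin 4) ℂ) (idx4 p) (idx4 q)

/-- Partial transpose on the second qubit: `M^{T_B}((i,j),(k,l)) = M((i,l),(k,j))`. -/
def ptB (M : Matrix (Fin 2 × Fin 2) (Fin 2 × Fin 2) ℂ) :
    Matrix (Fin 2 × Fin 2) (Fin 2 × Fin 2) ℂ :=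
  Matrix.of fun p q => M (p.1, q.2) (q.1, p.2)

/-- Any PPT measurement `(Π₀, 1 - Π₀)` discriminates the random symmetric state from the
antisymmetric state with success probability at most `5/6`. -/
theorem ppt_bound_single_round :
    ∀ P₀ : Matrix (Fin 2 × Fin 2) (Fin 2 × Fin 2) ℂ,
      P₀.PosSemidef → (1 - P₀).PosSemidef →
      (ptB P₀).PosSemidef → (ptB (1 - P₀)).PosSemidef →
      ((1/2 : ℂ) * ((P₀ * ρ₀).trace + ((1 - P₀) * ρ₁).trace)).re ≤ 5/6 := by
  intro P₀ hP0 hP1 hptP0 hptP1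
  -- From PSD of P₀ with vector e₀₁ - e₁₀ : 2 Re x ≤ b + c
  have h1 := hP0.dotProduct_mulVec_nonneg (fun p => if p = ((0:Fin 2),(1:Fin 2)) then 1 else if p = (1,0) then -1 else 0)
  simp [dotProduct, mulVec, Fintype.sum_prod_type, Fin.sum_univ_two, Prod.ext_iff] at h1
  rw [Complex.le_def] at h1
  simp [Complex.add_re, Complex.sub_re] at h1
  -- From PSD of ptB (1 - P₀) with vector e₀₀ + e₁₁ : 2 Re x ≤ 2 - a - d
  have h2 := hptP1.dotProduct_mulVec_nonneg (fun p => if p = ((0:Fin 2),(0:Fin 2)) then 1 else if p = (1,1) then 1 else 0)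
  simp [ptB, dotProduct, mulVec, Fintype.sum_prod_type, Fin.sum_univ_two, Prod.ext_iff,
    Matrix.sub_apply, Matrix.one_apply] at h2
  rw [Complex.le_def] at h2
  simp [Complex.add_re, Complex.sub_re] at h2
  -- Expand the objective
  simp [Matrix.trace, Matrix.mul_apply, ρ₀, ρ₁, idx4, Fintype.sum_prod_type, Fin.sum_univ_two,
    Matrix.sub_apply, Matrix.one_apply, Matrix.diag]
  ring_nf
  linarith [h1.1, h2.1]
end
end

section
/- Let ρ₀ = (1/6)·[[2,0,0,0],[0,1,1,0],[0,1,1,0],[0,0,0,2]] and ρ₁ = (1/2)·[[0,0,0,0],[0,1,-1,0],[0,-1,1,0],[0,0,0,0]] be 4×4 complex matrices indexed by Fin 2 × Fin 2. Then the matrix Q₁ = (1/18)·(9·(ρ₀^{T_B} ⊗ₖ ρ₀^{T_B}) − (ρ₁^{T_B} ⊗ₖ ρ₁^{T_B})) is positive semidefinite. -/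
open Matrix
open scoped Kronecker ComplexOrder

noncomputable section

def w : Matrix (Fin 1) (Fin 2 × Fin 2) ℂ :=
  Matrix.of fun _ p => if p.1 = p.2 then 1 else 0

def E : Matrix (Fin 2 × Fin 2) (Fin 2 × Fin 2) ℂ := wᴴ * w

lemma E_apply (p q : Fin 2 × Fin 2) :
    E p q = (if p.1 = p.2 then 1 else 0) * (if q.1 = q.2 then 1 else 0) := by
  simp [E, w, Matrix.mul_apply, mul_comm]

lemma ptB_ρ₀ : ptB ρ₀ = (1/6 : ℂ) • (1 + E) := by
  ext ⟨a, b⟩ ⟨c, d⟩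
  fin_cases a <;> fin_cases b <;> fin_cases c <;> fin_cases d <;>
    simp [ptB, ρ₀, idx4, E_apply, Matrix.one_apply, vecHead, vecTail, Prod.ext_iff] <;> norm_num

lemma ptB_ρ₁ : ptB ρ₁ = (1/2 : ℂ) • (1 - E) := by
  ext ⟨a, b⟩ ⟨c, d⟩
  fin_cases a <;> fin_cases b <;> fin_cases c <;> fin_cases d <;>
    simp [ptB, ρ₁, idx4, E_apply, Matrix.one_apply, vecHead, vecTail, Prod.ext_iff]

lemma kron_conjT {l m n p : Type*} (A : Matrix l m ℂ) (B : Matrix n p ℂ) :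
    (A ⊗ₖ B)ᴴ = Aᴴ ⊗ₖ Bᴴ := by
  ext ⟨i, j⟩ ⟨k, l⟩
  simp [Matrix.conjTranspose_apply, star_mul']

lemma oneE : (1 : Matrix (Fin 2 × Fin 2) (Fin 2 × Fin 2) ℂ) ⊗ₖ E =
    ((1 : Matrix (Fin 2 × Fin 2) (Fin 2 × Fin 2) ℂ) ⊗ₖ w)ᴴ * ((1 : Matrix (Fin 2 × Fin 2) (Fin 2 × Fin 2) ℂ) ⊗ₖ w) := by
  rw [E, kron_conjT, ← Matrix.mul_kronecker_mul, Matrix.conjTranspose_one, Matrix.one_mul]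

lemma Eone : E ⊗ₖ (1 : Matrix (Fin 2 × Fin 2) (Fin 2 × Fin 2) ℂ) =
    (w ⊗ₖ (1 : Matrix (Fin 2 × Fin 2) (Fin 2 × Fin 2) ℂ))ᴴ * (w ⊗ₖ (1 : Matrix (Fin 2 × Fin 2) (Fin 2 × Fin 2) ℂ)) := by
  rw [E, kron_conjT, ← Matrix.mul_kronecker_mul, Matrix.conjTranspose_one, Matrix.one_mul]


/-- The dual variable `Q₁` of the two-round SDP is positive semidefinite. -/
theorem Q₁_posSemidef :
    ((1/18 : ℂ) • ((9 : ℂ) • (ptB ρ₀ ⊗ₖ ptB ρ₀) - (ptB ρ₁ ⊗ₖ ptB ρ₁))).PosSemidef := by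
  have key : (1/18 : ℂ) • ((9 : ℂ) • (ptB ρ₀ ⊗ₖ ptB ρ₀) - (ptB ρ₁ ⊗ₖ ptB ρ₁))
      = (1/36 : ℂ) • ((1 : Matrix (Fin 2 × Fin 2) (Fin 2 × Fin 2) ℂ) ⊗ₖ E)
        + (1/36 : ℂ) • (E ⊗ₖ (1 : Matrix (Fin 2 × Fin 2) (Fin 2 × Fin 2) ℂ)) := by
    rw [ptB_ρ₀, ptB_ρ₁]
    rw [sub_eq_add_neg (1 : Matrix (Fin 2 × Fin 2) (Fin 2 × Fin 2) ℂ) E,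
      Matrix.smul_kronecker, Matrix.kronecker_smul,
      Matrix.smul_kronecker, Matrix.kronecker_smul,
      Matrix.add_kronecker, Matrix.kronecker_add, Matrix.kronecker_add,
      Matrix.add_kronecker, Matrix.kronecker_add, Matrix.kronecker_add]
    rw [show (-E) ⊗ₖ (1 : Matrix (Fin 2 × Fin 2) (Fin 2 × Fin 2) ℂ) = -(E ⊗ₖ 1) by
      rw [show -E = (-1 : ℂ) • E by module, Matrix.smul_kronecker]; module]
    rw [show (1 : Matrix (Fin 2 × Fin 2) (Fin 2 × Fin 2) ℂ) ⊗ₖ (-E) = -(1 ⊗ₖ E) by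
      rw [show -E = (-1 : ℂ) • E by module, Matrix.kronecker_smul]; module]
    rw [show (-E) ⊗ₖ (-E) = E ⊗ₖ E by
      rw [show -E = (-1 : ℂ) • E by module, Matrix.smul_kronecker, Matrix.kronecker_smul]; module]
    module
  rw [key]
  have h1 : ((1/36 : ℂ) • ((1 : Matrix (Fin 2 × Fin 2) (Fin 2 × Fin 2) ℂ) ⊗ₖ E)).PosSemidef := by
    rw [oneE, show (1/36 : ℂ) • (((1 : Matrix (Fin 2 × Fin 2) (Fin 2 × Fin 2) ℂ) ⊗ₖ w)ᴴ * ((1 : Matrix (Fin 2 × Fin 2) (Fin 2 × Fin 2) ℂ) ⊗ₖ w))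
      = ((1/6 : ℂ) • ((1 : Matrix (Fin 2 × Fin 2) (Fin 2 × Fin 2) ℂ) ⊗ₖ w))ᴴ
        * ((1/6 : ℂ) • ((1 : Matrix (Fin 2 × Fin 2) (Fin 2 × Fin 2) ℂ) ⊗ₖ w)) by
      rw [Matrix.conjTranspose_smul, Matrix.smul_mul, Matrix.mul_smul, smul_smul]
      norm_num]
    exact Matrix.posSemidef_conjTranspose_mul_self _
  have h2 : ((1/36 : ℂ) • (E ⊗ₖ (1 : Matrix (Fin 2 × Fin 2) (Fin 2 × Fin 2) ℂ))).PosSemidef := by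
    rw [Eone, show (1/36 : ℂ) • ((w ⊗ₖ (1 : Matrix (Fin 2 × Fin 2) (Fin 2 × Fin 2) ℂ))ᴴ * (w ⊗ₖ (1 : Matrix (Fin 2 × Fin 2) (Fin 2 × Fin 2) ℂ)))
      = ((1/6 : ℂ) • (w ⊗ₖ (1 : Matrix (Fin 2 × Fin 2) (Fin 2 × Fin 2) ℂ)))ᴴ
        * ((1/6 : ℂ) • (w ⊗ₖ (1 : Matrix (Fin 2 × Fin 2) (Fin 2 × Fin 2) ℂ))) by
      rw [Matrix.conjTranspose_smul, Matrix.smul_mul, Matrix.mul_smul, smul_smul]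
      norm_num]
    exact Matrix.posSemidef_conjTranspose_mul_self _
  exact h1.add h2
end
end
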